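/- arXiv:2308.14110 — 2 statements merged into one kernel-verified Lean document; each statement's English description precedes it below -/
import Mathlib

section
/- For every pair of quaternions q, p ∈ ℍ and γ > 0, the slice hyperholomorphic RBF kernel satisfies the diagonal identity K_{γ,S}(q,q) = exp(4 y²/γ²) where q = x + I y with x, y real and I an imaginary unit quaternion; that is, exp(-q²/γ²) · (Σ_{n=0}^∞ (2/γ²)ⁿ qⁿ conj(q)ⁿ / n!) · exp(-conj(q)²/γ²) = exp(-(q - conj(q))²/γ²). -/
open Quaternion

/-- Diagonal identity for the slice hyperholomorphic RBF kernel: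
`K_{γ,S}(q,q) = exp(-(q - conj q)²/γ²)`, and for `q = x + I y` with `I² = -1` this
equals `exp(4y²/γ²)`. -/
theorem slice_rbf_kernel_diagonal (γ : ℝ) (hγ : 0 < γ) (q : Quaternion ℝ)
    (x y : ℝ) (I : Quaternion ℝ) (hI : I ^ 2 = -1) (hq : q = (x : Quaternion ℝ) + (y : Quaternion ℝ) * I) :
    NormedSpace.exp (-q ^ 2 / ((γ : Quaternion ℝ)) ^ 2) *
        (∑' n : ℕ, (2 / (γ : Quaternion ℝ) ^ 2) ^ n * q ^ n * (star q) ^ n /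
          ((n.factorial : ℝ) : Quaternion ℝ)) *
        NormedSpace.exp (-(star q) ^ 2 / ((γ : Quaternion ℝ)) ^ 2) =
      NormedSpace.exp (-(q - star q) ^ 2 / ((γ : Quaternion ℝ)) ^ 2) ∧
    NormedSpace.exp (-(q - star q) ^ 2 / ((γ : Quaternion ℝ)) ^ 2) =
      ((Real.exp (4 * y ^ 2 / γ ^ 2) : ℝ) : Quaternion ℝ) := by
  let +nondep : NormedAlgebra ℚ ℍ := .restrictScalars ℚ ℝ ℍ
  have hqs : Commute q (star q) := by
    unfold Commute SemiconjBy
    rw [Quaternion.self_mul_star, Quaternion.star_mul_self]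
  -- the tsum equals exp of a real scalar
  have hT : (∑' n : ℕ, (2 / (γ : Quaternion ℝ) ^ 2) ^ n * q ^ n * (star q) ^ n /
      ((n.factorial : ℝ) : Quaternion ℝ)) =
      NormedSpace.exp (((2 / γ ^ 2 * normSq q : ℝ)) : Quaternion ℝ) := by
    have : CharZero ℍ := charZero_of_injective_algebraMap (algebraMap ℝ ℍ).injective
    rw [NormedSpace.exp_eq_tsum_div]
    refine tsum_congr fun n => ?_
    have h1 : q ^ n * (star q) ^ n = (((normSq q : ℝ) ^ n : ℝ) : Quaternion ℝ) := by
      rw [← hqs.mul_pow, Quaternion.self_mul_star]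
      push_cast
      ring
    have hc2 : (2 / (γ : Quaternion ℝ) ^ 2) = (((2 / γ ^ 2 : ℝ)) : Quaternion ℝ) := by
      have : ((2:ℝ):Quaternion ℝ) = 2 := by
        rw [show (2:ℝ) = ((2:ℕ):ℝ) by norm_num, Quaternion.coe_natCast]; norm_num
      push_cast [this]
      rfl
    rw [mul_assoc, h1, hc2]
    norm_cast
    rw [mul_pow]
  -- commutation facts
  have h1 : Commute (-q^2 : Quaternion ℝ) (-(star q)^2) :=
    ((hqs.pow_pow 2 2).neg_left).neg_right
  have hginv : (((γ : Quaternion ℝ))^2)⁻¹ = (((γ^2)⁻¹ : ℝ) : Quaternion ℝ) := by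
    rw [← Quaternion.coe_pow, ← Quaternion.coe_inv]
  have hAB : Commute (-q^2 / ((γ : Quaternion ℝ))^2) (-(star q)^2 / ((γ : Quaternion ℝ))^2) := by
    rw [div_eq_mul_inv, div_eq_mul_inv, hginv]
    have h2 : Commute (-q^2 : Quaternion ℝ) ((((γ^2)⁻¹ : ℝ)) : Quaternion ℝ) :=
      (Quaternion.coe_commute _ _).symm
    have h3 : Commute ((((γ^2)⁻¹ : ℝ)) : Quaternion ℝ) (-(star q)^2) :=
      Quaternion.coe_commute _ _
    exact (h1.mul_right h2).mul_left (h3.mul_right (Commute.refl _))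
  have hAC : Commute (-q^2 / ((γ : Quaternion ℝ))^2)
      (((2 / γ ^ 2 * normSq q : ℝ)) : Quaternion ℝ) :=
    (Quaternion.coe_commute _ _).symm
  have hCB : Commute (((2 / γ ^ 2 * normSq q : ℝ)) : Quaternion ℝ)
      (-(star q)^2 / ((γ : Quaternion ℝ))^2) :=
    Quaternion.coe_commute _ _
  constructor
  · rw [hT, ← NormedSpace.exp_add_of_commute hAC,
      ← NormedSpace.exp_add_of_commute (hAB.add_left hCB)]
    congr 1
    have e : (q - star q)^2 = q^2 - ((normSq q : ℝ) : Quaternion ℝ)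
        - ((normSq q : ℝ) : Quaternion ℝ) + (star q)^2 := by
      have e0 : (q - star q)^2 = q^2 - q * star q - star q * q + (star q)^2 := by
        noncomm_ring
      rw [e0, Quaternion.self_mul_star, Quaternion.star_mul_self]
    have hC : (((2 / γ ^ 2 * normSq q : ℝ)) : Quaternion ℝ)
        = ((2 * normSq q : ℝ) : Quaternion ℝ) / ((γ : Quaternion ℝ))^2 := by
      rw [← Quaternion.coe_pow, ← Quaternion.coe_div]
      exact congrArg _ (by ring)
    rw [hC, e, ← add_div, ← add_div]
    congr 1
    rw [show ((2 * normSq q : ℝ) : Quaternion ℝ)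
        = ((normSq q : ℝ) : Quaternion ℝ) + ((normSq q : ℝ) : Quaternion ℝ) by
      norm_cast; ring]
    noncomm_ring
  · -- second part
    have hre : I.re = 0 := by
      rw [sq] at hI
      have hR := congrArg QuaternionAlgebra.re hI
      have hA := congrArg QuaternionAlgebra.imI hI
      have hB := congrArg QuaternionAlgebra.imJ hI
      have hC := congrArg QuaternionAlgebra.imK hI
      simp [Quaternion.re_mul, Quaternion.imI_mul, Quaternion.imJ_mul,
        Quaternion.imK_mul] at hR hA hB hC
      by_contra h
      have hb : I.imI = 0 := by
        have : I.re * I.imI = 0 := by nlinarith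
        exact (mul_eq_zero.mp this).resolve_left h
      have hc : I.imJ = 0 := by
        have : I.re * I.imJ = 0 := by nlinarith
        exact (mul_eq_zero.mp this).resolve_left h
      have hd : I.imK = 0 := by
        have : I.re * I.imK = 0 := by nlinarith
        exact (mul_eq_zero.mp this).resolve_left h
      nlinarith [sq_nonneg I.re]
    have hsI : star I = -I := by
      ext <;> simp [hre]
    have hq2 : q = (x : Quaternion ℝ) + y • I := by
      rw [hq, ← Quaternion.coe_mul_eq_smul]
    have hstar : star q = (x : Quaternion ℝ) - y • I := by
      rw [hq2, star_add, Quaternion.star_smul, hsI, Quaternion.star_coe, smul_neg, ← sub_eq_add_neg]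
    have h5 : q - star q = (2*y) • I := by
      rw [hstar, hq2, two_mul, add_smul]
      abel
    have h6 : -(q - star q)^2 = (((4*y^2 : ℝ)) : Quaternion ℝ) := by
      rw [h5, smul_pow, hI, smul_neg, neg_neg, ← Quaternion.coe_one,
        Quaternion.smul_coe, mul_one]
      exact congrArg _ (by ring)
    have h7 : -(q - star q)^2 / ((γ : Quaternion ℝ))^2
        = ((4*y^2/γ^2 : ℝ) : Quaternion ℝ) := by
      rw [h6, ← Quaternion.coe_pow, ← Quaternion.coe_div]
    rw [h7, ← Quaternion.algebraMap_def,
      ← NormedSpace.map_exp (algebraMap ℝ (Quaternion ℝ)) (continuous_algebraMap ℝ _),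
      ← Real.exp_eq_exp_ℝ]
end

section
/- For γ > 0 and quaternions q, p ∈ ℍ, the slice hyperholomorphic RBF kernel admits the expansion K_{γ,S}(q,p) = Σ_{n=0}^∞ e_n^γ(q) e_n^γ(conj(p)), where e_n^γ(q) = √(2ⁿ/(γ^{2n} n!)) qⁿ exp(-q²/γ²) and exp and powers are taken in the quaternions (note q and functions of q commute, and similarly for conj(p)). -/
open Quaternion

/-- The slice hyperholomorphic RBF basis functions
`eₙ^γ(q) = √(2ⁿ/(γ^{2n} n!)) qⁿ exp(-q²/γ²)`. -/
noncomputable def sliceRBFBasis (γ : ℝ) (n : ℕ) (q : Quaternion ℝ) : Quaternion ℝ :=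
  ((Real.sqrt (2 ^ n / (γ ^ (2 * n) * n.factorial)) : ℝ) : Quaternion ℝ) * q ^ n *
    NormedSpace.exp (-q ^ 2 / ((γ : Quaternion ℝ)) ^ 2)

/-- Expansion of the slice hyperholomorphic RBF kernel:
`K_{γ,S}(q,p) = Σₙ eₙ^γ(q) eₙ^γ(conj p)`. -/
theorem slice_rbf_kernel_expansion (γ : ℝ) (hγ : 0 < γ) (q p : Quaternion ℝ) :
    HasSum (fun n : ℕ => sliceRBFBasis γ n q * sliceRBFBasis γ n (star p))
      (NormedSpace.exp (-q ^ 2 / ((γ : Quaternion ℝ)) ^ 2) *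
        (∑' n : ℕ, (2 / (γ : Quaternion ℝ) ^ 2) ^ n * q ^ n * (star p) ^ n /
          ((n.factorial : ℝ) : Quaternion ℝ)) *
        NormedSpace.exp (-(star p) ^ 2 / ((γ : Quaternion ℝ)) ^ 2)) := by
  set Eq := NormedSpace.exp (-q ^ 2 / ((γ : Quaternion ℝ)) ^ 2) with hEq
  set Ep := NormedSpace.exp (-(star p) ^ 2 / ((γ : Quaternion ℝ)) ^ 2) with hEp
  set a : ℕ → Quaternion ℝ := fun n =>
    (2 / (γ : Quaternion ℝ) ^ 2) ^ n * q ^ n * (star p) ^ n / ((n.factorial : ℝ) : Quaternion ℝ)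
    with haDef
  -- summability of the middle series
  have hsum : Summable a := by
    apply Summable.of_norm
    have h := Real.summable_pow_div_factorial (‖(2 / (γ : Quaternion ℝ) ^ 2)‖ * ‖q‖ * ‖star p‖)
    refine h.of_nonneg_of_le (fun n => norm_nonneg _) (fun n => le_of_eq ?_)
    simp only [haDef]
    rw [norm_div, norm_mul, norm_mul, norm_pow, norm_pow, norm_pow, mul_pow, mul_pow]
    norm_num [Quaternion.norm_coe]
  have ha : HasSum (fun n => Eq * a n * Ep) (Eq * (∑' n, a n) * Ep) :=
    (hsum.hasSum.mul_left Eq).mul_right Ep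
  convert ha using 2 with n
  -- termwise equality
  simp only [sliceRBFBasis, haDef, ← hEq, ← hEp]
  have hc : (0:ℝ) ≤ 2 ^ n / (γ ^ (2 * n) * (n.factorial : ℝ)) := by positivity
  -- `q ^ n` commutes with `Eq`
  have hcomm : q ^ n * Eq = Eq * q ^ n := by
    have h1 : Commute (q ^ n) (-q ^ 2) := ((Commute.refl q).pow_pow n 2).neg_right
    have h2 : Commute (q ^ n) (((γ : Quaternion ℝ)) ^ 2)⁻¹ :=
      (((Quaternion.coe_commute γ q).symm).pow_pow n 2).inv_right₀
    have h3 : Commute (q ^ n) (-q ^ 2 / ((γ : Quaternion ℝ)) ^ 2) := by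
      rw [div_eq_mul_inv]; exact h1.mul_right h2
    exact (h3.exp_right).eq
  have hc2 : (2 / ((γ : Quaternion ℝ)) ^ 2) ^ n
      = (((2 / γ ^ 2 : ℝ) ^ n : ℝ) : Quaternion ℝ) := by
    rw [Quaternion.coe_pow, Quaternion.coe_div, Quaternion.coe_pow,
      show ((2:ℝ):Quaternion ℝ) = (2:Quaternion ℝ) from by norm_cast]
  have hfac : ((n.factorial : ℝ) : Quaternion ℝ)⁻¹
      = ((((n.factorial : ℝ))⁻¹ : ℝ) : Quaternion ℝ) := (Quaternion.coe_inv _).symm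
  have hγne : γ ≠ 0 := hγ.ne'
  rw [hc2]
  simp only [div_eq_mul_inv, hfac, Quaternion.coe_mul_eq_smul,
    Quaternion.mul_coe_eq_smul, smul_mul_assoc, mul_smul_comm, smul_smul]
  congr 1
  · rw [Real.mul_self_sqrt (by positivity)]
    rw [pow_mul]
    field_simp
    rw [← mul_pow]; congr 1; field_simp
  · rw [hcomm]; simp [mul_assoc]
end
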